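/- The set R_e = σ_e(D_e) is closed in Y: if a sequence in R_e converges in Y, its limit lies in R_e. Explicitly, R_e is the disjoint union of the clopen sets R_m = { y ∈ Y : y_i = r(e) for i < m, and y_m = ew' for some w' with |w'| ≡ −1 (mod n_{m−1}) } for m < ∞ together with the singleton R_∞ = {(r(e), r(e), …)}, and any limit point of R_e either lies in some R_m or equals (r(e), r(e), …). -/

import Mathlib

/-- A directed graph: vertices, edges, source and range maps. -/
structure DirGraph where
  V : Type
  E : Type
  s : E → V
  r : E → V

namespace DirGraph

/-- `G.IsPathFrom x l` : the list of edges `l` (in walking order) forms a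
path starting at the vertex `x`. -/
def IsPathFrom (G : DirGraph) : G.V → List G.E → Prop
  | _, [] => True
  | x, e :: es => G.s e = x ∧ G.IsPathFrom (G.r e) es

/-- The vertex reached after walking the edges `l` starting at `x`. -/
def endAt (G : DirGraph) : G.V → List G.E → G.V
  | x, [] => x
  | _, e :: es => G.endAt (G.r e) es

/-- A finite path in `G`: a source vertex together with a composable list of
edges (in walking order).  Vertices are the paths with no edges. -/
structure Path (G : DirGraph) where
  src : G.V
  edges : List G.E
  valid : G.IsPathFrom src edges

namespace Path

variable {G : DirGraph}

/-- The range (final vertex) of a path. -/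
def rng (p : G.Path) : G.V := G.endAt p.src p.edges

/-- The length of a path. -/
def length (p : G.Path) : ℕ := p.edges.length

/-- The trivial path at a vertex. -/
def nil (x : G.V) : G.Path := ⟨x, [], trivial⟩

end Path

variable {G : DirGraph}

theorem isPathFrom_append :
    ∀ (l₁ l₂ : List G.E) (x : G.V), G.IsPathFrom x l₁ →
      G.IsPathFrom (G.endAt x l₁) l₂ → G.IsPathFrom x (l₁ ++ l₂)
  | [], _, _, _, h₂ => h₂
  | e :: es, l₂, _, h₁, h₂ => ⟨h₁.1, isPathFrom_append es l₂ (G.r e) h₁.2 h₂⟩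

theorem endAt_append :
    ∀ (l₁ l₂ : List G.E) (x : G.V), G.endAt x (l₁ ++ l₂) = G.endAt (G.endAt x l₁) l₂
  | [], _, _ => rfl
  | e :: es, l₂, x => endAt_append es l₂ (G.r e)

theorem isPathFrom_take_drop :
    ∀ (l : List G.E) (k : ℕ) (x : G.V), G.IsPathFrom x l →
      G.IsPathFrom (G.endAt x (l.take k)) (l.drop k)
  | [], k, _, h => by cases k <;> exact h
  | _ :: _, 0, _, h => h
  | e :: es, k + 1, x, h => isPathFrom_take_drop es k (G.r e) h.2

/-- Extend a path by one more edge at its end (`p.cons e` is the path `e·p`). -/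
def Path.cons (p : G.Path) (e : G.E) (h : G.s e = p.rng) : G.Path :=
  ⟨p.src, p.edges ++ [e], isPathFrom_append p.edges [e] p.src p.valid ⟨h, trivial⟩⟩

@[simp] theorem Path.cons_length (p : G.Path) (e : G.E) (h : G.s e = p.rng) :
    (p.cons e h).length = p.length + 1 := by
  simp [Path.cons, Path.length]

/-- The remainder `w(n)` of a path modulo `n`: the final segment of length
`|w| % n` (the part of `w` walked last). -/
def Path.rem (p : G.Path) (n : ℕ) : G.Path :=
  ⟨G.endAt p.src (p.edges.take (p.length - p.length % n)),
   p.edges.drop (p.length - p.length % n),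
   isPathFrom_take_drop p.edges _ p.src p.valid⟩

theorem Path.rem_length (p : G.Path) (n : ℕ) : (p.rem n).length = p.length % n := by
  show (p.edges.drop (p.length - p.length % n)).length = _
  rw [List.length_drop]
  exact Nat.sub_sub_self (Nat.mod_le _ _)

theorem Path.rem_rng (p : G.Path) (n : ℕ) : (p.rem n).rng = p.rng := by
  show G.endAt (G.endAt p.src (p.edges.take (p.length - p.length % n)))
      (p.edges.drop (p.length - p.length % n)) = _
  rw [← endAt_append, List.take_append_drop]
  rfl

/-- The graph `E(n)`: vertices are paths of length `< n` in `G`, edges are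
pairs `(e, w)` with `s(e) = r(w)`; `s(e,w) = w` and `r(e,w) = ew` if
`|w| < n - 1`, and `r(e,w) = r(e)` if `|w| = n - 1`. -/
def graphN (G : DirGraph) (n : ℕ) : DirGraph where
  V := {w : G.Path // w.length < n}
  E := {p : G.E × G.Path // p.2.length < n ∧ G.s p.1 = p.2.rng}
  s := fun f => ⟨f.val.2, f.prop.1⟩
  r := fun f =>
    if h : f.val.2.length + 1 < n then
      ⟨f.val.2.cons f.val.1 f.prop.2, by simpa using h⟩
    else
      ⟨Path.nil (G.r f.val.1), by
        have := f.prop.1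
        simp only [Path.nil, Path.length, List.length_nil]
        omega⟩

/-- A factor map between (finite) directed graphs. -/
structure FactorMap (F E : DirGraph) where
  m0 : F.V → E.V
  m1 : F.E → E.E
  src_eq : ∀ f, E.s (m1 f) = m0 (F.s f)
  rng_eq : ∀ f, E.r (m1 f) = m0 (F.r f)
  lift : ∀ (e' : E.E) (v : F.V), E.s e' = m0 v →
    ∃! f : F.E, m1 f = e' ∧ F.s f = v

/-- The simple loop (cycle) digraph with `j` vertices. -/
def cyc (j : ℕ) : DirGraph where
  V := ZMod j
  E := ZMod j
  s := id
  r := fun i => i + 1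

end DirGraph

namespace DirGraph

/-- `Xc G n i` is the (discrete) space `X_{i+1}` of paths in `G` of length
`< n (i+1)` whose length is divisible by `n i`. -/
abbrev Xc (G : DirGraph) (n : ℕ → ℕ) (i : ℕ) : Type :=
  {w : G.Path // w.length < n (i + 1) ∧ n i ∣ w.length}

instance (G : DirGraph) (n : ℕ → ℕ) (i : ℕ) : TopologicalSpace (Xc G n i) := ⊥

instance (G : DirGraph) (n : ℕ → ℕ) (i : ℕ) : DiscreteTopology (Xc G n i) := ⟨rfl⟩

/-- `Yt G n` is the `{n_k}`-compactification `Y` of `E*`: the composable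
sequences in `Π_i X_i`, with the product topology (each `X_i` discrete). -/
abbrev Yt (G : DirGraph) (n : ℕ → ℕ) : Type :=
  {y : ∀ i, Xc G n i // ∀ i, (y i).val.src = (y (i + 1)).val.rng}

/-- The `i`-th coordinate path of an element of `Y`. -/
def yc {G : DirGraph} {n : ℕ → ℕ} (y : Yt G n) (i : ℕ) : G.Path := (y.val i).val

/-- The domain `D_e = { y ∈ Y : r(y₁) = s(e) }` of the odometer map `σ_e`. -/
def De (G : DirGraph) (n : ℕ → ℕ) (e : G.E) : Set (Yt G n) :=
  {y | (yc y 0).rng = G.s e}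

/-- `Represents G n w y` says that `y ∈ Y` is the image `τ(w)` of the path
`w` under the canonical embedding: from some index `k` on the coordinates are
the trivial path at `s(w)`, and `w` is the concatenation `w₁ w₂ ⋯ w_k` of the
first `k` coordinates (the `k`-th walked first). -/
def Represents (G : DirGraph) (n : ℕ → ℕ) (w : G.Path) (y : Yt G n) : Prop :=
  ∃ k : ℕ,
    (∀ i, k ≤ i → (yc y i).edges = [] ∧ (yc y i).src = w.src) ∧
    w.edges = (((List.range k).map fun i => (yc y i).edges).reverse).flatten

/-- `Carry G n e y z i0` : `z = σ_e(y)` where `i0 = i(y) < ∞` is the least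
index with `|y_{i0}| < n_{i0+1} - n_{i0}`: the coordinates below `i0` of `z`
are the trivial path at `r(e)`, the `i0`-th is `e y₀ y₁ ⋯ y_{i0}`, and the
coordinates above `i0` are unchanged. -/
def Carry (G : DirGraph) (n : ℕ → ℕ) (e : G.E) (y z : Yt G n) (i0 : ℕ) : Prop :=
  (yc y i0).length < n (i0 + 1) - n i0 ∧
  (∀ i < i0, ¬ (yc y i).length < n (i + 1) - n i) ∧
  (∀ i < i0, (yc z i).edges = [] ∧ (yc z i).src = G.r e) ∧
  (yc z i0).src = (yc y i0).src ∧
  (yc z i0).edges =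
    (yc y i0).edges ++ (((List.range i0).map fun i => (yc y i).edges).reverse).flatten
      ++ [e] ∧
  ∀ i, i0 < i → yc z i = yc y i

/-- `OdRel G n e y z` : `z = σ_e(y)`, the graph of the odometer map `σ_e`:
either there is a least index `i0 = i(y)` and a carry happens there, or all
coordinates of `y` are maximal and `z = (r(e), r(e), …)`. -/
def OdRel (G : DirGraph) (n : ℕ → ℕ) (e : G.E) (y z : Yt G n) : Prop :=
  (∃ i0, Carry G n e y z i0) ∨
  ((∀ i, ¬ (yc y i).length < n (i + 1) - n i) ∧
    ∀ i, (yc z i).edges = [] ∧ (yc z i).src = G.r e)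

/-- A subset `B ⊆ Y` is invariant for the odometer maps `σ`. -/
def Invariant (G : DirGraph) (n : ℕ → ℕ) (σ : G.E → Yt G n → Yt G n)
    (B : Set (Yt G n)) : Prop :=
  (∀ e : G.E, ∀ y ∈ B ∩ De G n e, σ e y ∈ B) ∧
  (∀ y : Yt G n, (∃ f : G.E, ∃ z ∈ De G n f ∩ B, σ f z = y) → y ∈ B)

end DirGraph

namespace DirGraph

/-- The clopen piece `R_m` of `R_e`: coordinates below `m` are the trivial
path at `r(e)`, and the `m`-th coordinate is `e w'` with
`|w'| ≡ −1 (mod n_{m-1})` (`e` the last edge walked). -/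
def RsetM (G : DirGraph) (n : ℕ → ℕ) (e : G.E) (m : ℕ) : Set (Yt G n) :=
  {y | (∀ i < m, (yc y i).edges = [] ∧ (yc y i).src = G.r e) ∧
    ∃ l : List G.E, (yc y m).edges = l ++ [e] ∧ n m ∣ l.length + 1}

/-- The singleton `R_∞ = {(r(e), r(e), …)}`. -/
def Rinf (G : DirGraph) (n : ℕ → ℕ) (e : G.E) : Set (Yt G n) :=
  {y | ∀ i, (yc y i).edges = [] ∧ (yc y i).src = G.r e}

end DirGraph

namespace DirGraph
variable {G : DirGraph}

theorem Path.ext' : ∀ {p q : G.Path}, p.src = q.src → p.edges = q.edges → p = q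
  | ⟨_, _, _⟩, ⟨_, _, _⟩, rfl, rfl => rfl

theorem yt_ext {n : ℕ → ℕ} {y z : Yt G n} (h : ∀ i, yc y i = yc z i) : y = z :=
  Subtype.ext (funext fun i => Subtype.ext (h i))

theorem isPathFrom_take :
    ∀ (l : List G.E) (k : ℕ) (x : G.V), G.IsPathFrom x l → G.IsPathFrom x (l.take k)
  | [], k, _, _ => by cases k <;> trivial
  | _ :: _, 0, _, _ => trivial
  | e :: es, k + 1, _, h => ⟨h.1, isPathFrom_take es k (G.r e) h.2⟩

theorem continuous_coord {n : ℕ → ℕ} (i : ℕ) :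
    Continuous (fun y : Yt G n => (y.val i)) :=
  (continuous_apply i).comp continuous_subtype_val

theorem isClopen_coord {n : ℕ → ℕ} (i : ℕ) (S : Set (Xc G n i)) :
    IsClopen {y : Yt G n | y.val i ∈ S} :=
  (isClopen_discrete S).preimage (continuous_coord i)

/-- uniqueness of the odometer image -/
theorem odRel_unique {n : ℕ → ℕ} {e : G.E} {y z z' : Yt G n}
    (h : OdRel G n e y z) (h' : OdRel G n e y z') : z = z' := by
  rcases h with ⟨i0, hc⟩ | ⟨hmax, hz⟩
  · rcases h' with ⟨i0', hc'⟩ | ⟨hmax', _⟩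
    · have hi : i0 = i0' := by
        by_contra hne
        rcases Nat.lt_or_ge i0 i0' with h1 | h1
        · exact hc'.2.1 i0 h1 hc.1
        · exact hc.2.1 i0' (lt_of_le_of_ne h1 (Ne.symm hne)) hc'.1
      subst hi
      refine yt_ext fun i => ?_
      rcases Nat.lt_trichotomy i i0 with hlt | rfl | hgt
      · exact Path.ext' ((hc.2.2.1 i hlt).2.trans (hc'.2.2.1 i hlt).2.symm)
          ((hc.2.2.1 i hlt).1.trans (hc'.2.2.1 i hlt).1.symm)
      · exact Path.ext' (hc.2.2.2.1.trans hc'.2.2.2.1.symm)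
          (hc.2.2.2.2.1.trans hc'.2.2.2.2.1.symm)
      · exact (hc.2.2.2.2.2 i hgt).trans (hc'.2.2.2.2.2 i hgt).symm
    · exact absurd hc.1 (hmax' i0)
  · rcases h' with ⟨i0', hc'⟩ | ⟨_, hz'⟩
    · exact absurd hc'.1 (hmax i0')
    · exact yt_ext fun i => Path.ext' ((hz i).2.trans (hz' i).2.symm)
        ((hz i).1.trans (hz' i).1.symm)

theorem exists_path_rng : ∀ (L : ℕ) (v : G.V), (∀ v : G.V, ∃ e : G.E, G.r e = v) →
    ∃ p : G.Path, p.length = L ∧ p.rng = v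
  | 0, v, _ => ⟨Path.nil v, rfl, rfl⟩
  | L + 1, v, hns => by
    obtain ⟨f, hf⟩ := hns v
    obtain ⟨p, hp1, hp2⟩ := exists_path_rng L (G.s f) hns
    refine ⟨p.cons f hp2.symm, by simp [hp1], ?_⟩
    show G.endAt p.src (p.edges ++ [f]) = v
    rw [endAt_append]
    exact hf

end DirGraph
namespace DirGraph
variable {G : DirGraph}

/-- The segment of the path `(src0, l)` between positions `a` and `b`. -/
def seg (src0 : G.V) (l : List G.E) (hl : G.IsPathFrom src0 l) (a b : ℕ) (hab : a ≤ b) :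
    G.Path where
  src := G.endAt src0 (l.take a)
  edges := (l.take b).drop a
  valid := by
    have h2 := isPathFrom_take_drop (l.take b) a src0 (isPathFrom_take l b src0 hl)
    rwa [List.take_take, min_eq_left hab] at h2

@[simp] theorem seg_src (src0 : G.V) (l : List G.E) (hl : G.IsPathFrom src0 l) (a b : ℕ)
    (hab : a ≤ b) : (seg src0 l hl a b hab).src = G.endAt src0 (l.take a) := rfl

@[simp] theorem seg_edges (src0 : G.V) (l : List G.E) (hl : G.IsPathFrom src0 l) (a b : ℕ)
    (hab : a ≤ b) : (seg src0 l hl a b hab).edges = (l.take b).drop a := rfl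

theorem seg_rng (src0 : G.V) (l : List G.E) (hl : G.IsPathFrom src0 l) (a b : ℕ)
    (hab : a ≤ b) : (seg src0 l hl a b hab).rng = G.endAt src0 (l.take b) := by
  show G.endAt (G.endAt src0 (l.take a)) ((l.take b).drop a) = _
  rw [← endAt_append]
  congr 1
  have h : l.take a = (l.take b).take a := by rw [List.take_take, min_eq_left hab]
  rw [h, List.take_append_drop]

theorem seg_length (src0 : G.V) (l : List G.E) (hl : G.IsPathFrom src0 l) (a b : ℕ)
    (hab : a ≤ b) (hbl : b ≤ l.length) : (seg src0 l hl a b hab).length = b - a := by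
  show ((l.take b).drop a).length = b - a
  simp [List.length_drop, List.length_take]
  omega

theorem drop_take_append {α : Type*} (l : List α) (a b : ℕ) (hab : a ≤ b) :
    (l.take b).drop a ++ l.drop b = l.drop a := by
  conv_rhs => rw [← List.take_append_drop (b - a) (l.drop a)]
  congr 1
  · rw [List.drop_take]
  · rw [List.drop_drop]
    congr 1
    omega

end DirGraph
namespace DirGraph
variable {G : DirGraph}

theorem rsetM_sub {n : ℕ → ℕ} (h0 : n 0 = 1) (hmono : StrictMono n)
    (hdvd : ∀ i, n i ∣ n (i + 1)) (e : G.E) (m : ℕ) {z : Yt G n}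
    (hz : z ∈ RsetM G n e m) : ∃ y ∈ De G n e, OdRel G n e y z := by
  obtain ⟨htriv, l, hle, hdl⟩ := hz
  set L := l.length with hLdef
  have hpos : ∀ i, 1 ≤ n i := fun i => h0 ▸ hmono.monotone (Nat.zero_le i)
  have hlen : (yc z m).length = L + 1 := by
    show (yc z m).edges.length = L + 1
    rw [hle]; simp [hLdef]
  have hLn : L + 1 < n (m + 1) := by
    have := (z.val m).prop.1
    rwa [show (z.val m).val = yc z m from rfl, hlen] at this
  have hnm : n m ≤ L + 1 := Nat.le_of_dvd (Nat.succ_pos _) hdl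
  have hni : ∀ i ≤ m, n i ≤ L + 1 := fun i hi => le_trans (hmono.monotone hi) hnm
  -- path validity of the prefix `l`
  have hvl : G.IsPathFrom (yc z m).src l := by
    have h1 := isPathFrom_take (yc z m).edges L (yc z m).src (yc z m).valid
    rwa [hle, show (l ++ [e]).take L = l by simp [hLdef]] at h1
  have hse : G.s e = G.endAt (yc z m).src l := by
    have h1 := isPathFrom_take_drop (yc z m).edges L (yc z m).src (yc z m).valid
    rw [hle, show (l ++ [e]).take L = l by simp [hLdef],
      show (l ++ [e]).drop L = [e] by simp [hLdef]] at h1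
    exact h1.1
  set src0 := (yc z m).src with hsrc0
  have hb : ∀ i, L + 1 - n (i + 1) ≤ L + 1 - n i :=
    fun i => Nat.sub_le_sub_left (le_of_lt (hmono (Nat.lt_succ_self i))) _
  have hbm1 : L + 1 - n (m + 1) = 0 := by omega
  -- the coordinate paths
  set p : ℕ → G.Path := fun i => seg src0 l hvl (L + 1 - n (i + 1)) (L + 1 - n i) (hb i)
    with hpdef
  have hplen : ∀ i ≤ m, (p i).length = (L + 1 - n i) - (L + 1 - n (i + 1)) := by
    intro i hi
    refine seg_length _ _ _ _ _ _ ?_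
    have := hpos i; have := hni i hi; omega
  have hmem : ∀ i, i ≤ m → (p i).length < n (i + 1) ∧ n i ∣ (p i).length := by
    intro i hi
    rw [hplen i hi]
    rcases eq_or_lt_of_le hi with rfl | him
    · constructor
      · omega
      · rw [hbm1, Nat.sub_zero]
        exact (Nat.dvd_sub hdl dvd_rfl)
    · have h1 : n (i + 1) ≤ L + 1 := hni (i + 1) him
      have h2 : n i < n (i + 1) := hmono (Nat.lt_succ_self i)
      have h3 : (L + 1 - n i) - (L + 1 - n (i + 1)) = n (i + 1) - n i := by omega
      rw [h3]
      constructor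
      · have := hpos i; omega
      · exact Nat.dvd_sub (hdvd i) dvd_rfl
  set f : ∀ i, Xc G n i := fun i => if h : i ≤ m then ⟨p i, hmem i h⟩ else z.val i with hfdef
  have hf1 : ∀ i, i ≤ m → (f i).val = p i := fun i hi => by rw [hfdef]; simp [dif_pos hi]
  have hf2 : ∀ i, ¬ i ≤ m → (f i).val = yc z i := fun i hi => by
    simp only [hfdef, dif_neg hi]; rfl
  have hcomp : ∀ i, (f i).val.src = (f (i + 1)).val.rng := by
    intro i
    by_cases hi1 : i + 1 ≤ m
    · have hi0 : i ≤ m := le_trans (Nat.le_succ i) hi1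
      rw [hf1 i hi0, hf1 (i + 1) hi1, hpdef]
      rw [seg_rng, seg_src]
    · by_cases hi0 : i ≤ m
      · have him : i = m := by omega
        subst him
        rw [hf1 i hi0, hf2 (i + 1) hi1, hpdef, seg_src, hbm1, List.take_zero]
        exact z.prop i
      · rw [hf2 i hi0, hf2 (i + 1) hi1]
        exact z.prop i
  refine ⟨⟨f, hcomp⟩, ?_, ?_⟩
  · -- y ∈ De
    show (f 0).val.rng = G.s e
    rw [hf1 0 (Nat.zero_le m), hpdef, seg_rng,
      show L + 1 - n 0 = L by omega, hLdef, List.take_length, ← hse]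
  · -- OdRel: carry at m
    have hyc : ∀ i, yc ⟨f, hcomp⟩ i = (f i).val := fun _ => rfl
    left
    refine ⟨m, ?_, ?_, htriv, ?_, ?_, ?_⟩
    · rw [hyc, hf1 m (le_refl m), hplen m (le_refl m)]
      omega
    · intro i hi
      rw [hyc, hf1 i (le_of_lt hi), hplen i (le_of_lt hi)]
      have h1 : n (i + 1) ≤ L + 1 := hni (i + 1) hi
      have h2 : n i < n (i + 1) := hmono (Nat.lt_succ_self i)
      omega
    · rw [hyc, hf1 m (le_refl m), hpdef, seg_src, hbm1, List.take_zero]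
      rfl
    · -- the edges identity
      have key : ∀ j, j ≤ m →
          (((List.range j).map fun i => (yc ⟨f, hcomp⟩ i).edges).reverse).flatten
          = l.drop (L + 1 - n j) := by
        intro j hj
        induction j with
        | zero =>
          simp [h0, hLdef]
        | succ j ih =>
          rw [List.range_succ, List.map_append, List.reverse_append]
          simp only [List.map_cons, List.map_nil, List.reverse_cons, List.reverse_nil,
            List.nil_append, List.flatten_append, List.flatten_cons, List.flatten_nil,
            List.append_nil]
          rw [ih (le_trans (Nat.le_succ j) hj)]
          rw [hyc, hf1 j (le_trans (Nat.le_succ j) hj), hpdef, seg_edges]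
          exact drop_take_append l _ _ (hb j)
      rw [hyc, key m (le_refl m), hf1 m (le_refl m), hpdef, seg_edges, hbm1, List.drop_zero]
      rw [hle, List.take_append_drop]
    · intro i hi
      rw [hyc, hf2 i (by omega)]

end DirGraph
namespace DirGraph
variable {G : DirGraph}

theorem rinf_sub {n : ℕ → ℕ} (hnosource : ∀ v : G.V, ∃ e : G.E, G.r e = v)
    (h0 : n 0 = 1) (hmono : StrictMono n) (hdvd : ∀ i, n i ∣ n (i + 1)) (e : G.E)
    {z : Yt G n} (hz : z ∈ Rinf G n e) : ∃ y ∈ De G n e, OdRel G n e y z := by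
  classical
  have hpos : ∀ i, 1 ≤ n i := fun i => h0 ▸ hmono.monotone (Nat.zero_le i)
  have hex : ∀ (L : ℕ) (v : G.V), ∃ p : G.Path, p.length = L ∧ p.rng = v :=
    fun L v => exists_path_rng L v hnosource
  obtain ⟨pick, hpick⟩ : ∃ pick : ℕ → G.V → G.Path,
      ∀ L v, (pick L v).length = L ∧ (pick L v).rng = v :=
    ⟨fun L v => (hex L v).choose, fun L v => (hex L v).choose_spec⟩
  obtain ⟨g, hg0, hgs⟩ : ∃ g : ℕ → G.Path, g 0 = pick (n 1 - n 0) (G.s e) ∧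
      ∀ j, g (j + 1) = pick (n (j + 2) - n (j + 1)) (g j).src :=
    ⟨fun i => Nat.rec (pick (n 1 - n 0) (G.s e)) (fun j q => pick (n (j + 2) - n (j + 1)) q.src) i,
      rfl, fun _ => rfl⟩
  have hglen : ∀ i, (g i).length = n (i + 1) - n i := by
    intro i
    cases i with
    | zero => rw [hg0]; exact (hpick _ _).1
    | succ j => rw [hgs j]; exact (hpick _ _).1
  have hgrng : ∀ j, (g (j + 1)).rng = (g j).src := fun j => by
    rw [hgs j]; exact (hpick _ _).2
  have hmem : ∀ i, (g i).length < n (i + 1) ∧ n i ∣ (g i).length := by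
    intro i
    rw [hglen i]
    refine ⟨?_, Nat.dvd_sub (hdvd i) dvd_rfl⟩
    have h1 := hpos i
    have h2 : n i < n (i + 1) := hmono (Nat.lt_succ_self i)
    omega
  refine ⟨⟨fun i => ⟨g i, hmem i⟩, fun i => (hgrng i).symm⟩, ?_, ?_⟩
  · show (g 0).rng = G.s e
    rw [hg0]; exact (hpick _ _).2
  · right
    refine ⟨?_, hz⟩
    intro i
    show ¬ (g i).length < n (i + 1) - n i
    rw [hglen i]
    omega

theorem rsetM_clopen {n : ℕ → ℕ} (e : G.E) (m : ℕ) : IsClopen (RsetM G n e m) := by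
  have heq : RsetM G n e m =
      (⋂ i ∈ Finset.range m,
        {y : Yt G n | y.val i ∈ {x : Xc G n i | x.val.edges = [] ∧ x.val.src = G.r e}}) ∩
      {y : Yt G n | y.val m ∈
        {x : Xc G n m | ∃ l : List G.E, x.val.edges = l ++ [e] ∧ n m ∣ l.length + 1}} := by
    ext y
    simp only [RsetM, Set.mem_setOf_eq, Set.mem_inter_iff, Set.mem_iInter, Finset.mem_range]
    rfl
  rw [heq]
  exact IsClopen.inter (isClopen_biInter_finset fun i _ => isClopen_coord i _)
    (isClopen_coord m _)

end DirGraph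
open DirGraph in
/-- The range `R_e = σ_e(D_e)` is closed in `Y`; explicitly
it is the disjoint union of the clopen sets `R_m` together with the singleton
`R_∞ = {(r(e), r(e), …)}`. -/
theorem stmt15 (G : DirGraph) [Fintype G.V] [Fintype G.E]
    (hnosource : ∀ v : G.V, ∃ e : G.E, G.r e = v)
    (hnosink : ∀ v : G.V, ∃ e : G.E, G.s e = v)
    (n : ℕ → ℕ) (h0 : n 0 = 1) (hmono : StrictMono n) (hdvd : ∀ i, n i ∣ n (i + 1))
    (e : G.E) (σ : Yt G n → Yt G n)
    (hσ : ∀ y ∈ De G n e, OdRel G n e y (σ y)) :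
    IsClosed (σ '' De G n e) ∧
    σ '' De G n e = (⋃ m, RsetM G n e m) ∪ Rinf G n e ∧
    (∀ m, IsClopen (RsetM G n e m)) ∧
    (∀ m m', m ≠ m' → Disjoint (RsetM G n e m) (RsetM G n e m')) ∧
    (∀ m, Disjoint (RsetM G n e m) (Rinf G n e)) := by
  classical
  have heq : σ '' De G n e = (⋃ m, RsetM G n e m) ∪ Rinf G n e := by
    apply Set.Subset.antisymm
    · rintro z ⟨y, hy, rfl⟩
      rcases hσ y hy with ⟨i0, hc⟩ | ⟨_, hzc⟩
      · left
        refine Set.mem_iUnion.2 ⟨i0, hc.2.2.1,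
          (yc y i0).edges ++ (((List.range i0).map fun i => (yc y i).edges).reverse).flatten,
          hc.2.2.2.2.1, ?_⟩
        have hd := ((σ y).val i0).prop.2
        have hlen : (yc (σ y) i0).length =
            ((yc y i0).edges ++
              (((List.range i0).map fun i => (yc y i).edges).reverse).flatten).length + 1 := by
          show (yc (σ y) i0).edges.length = _
          rw [hc.2.2.2.2.1]
          simp
          omega
        rwa [show ((σ y).val i0).val = yc (σ y) i0 from rfl, hlen] at hd
      · right
        exact hzc
    · rintro z (hz | hz)
      · obtain ⟨m, hm⟩ := Set.mem_iUnion.1 hz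
        obtain ⟨y, hy, hrel⟩ := rsetM_sub h0 hmono hdvd e m hm
        exact ⟨y, hy, odRel_unique (hσ y hy) hrel⟩
      · obtain ⟨y, hy, hrel⟩ := rinf_sub hnosource h0 hmono hdvd e hz
        exact ⟨y, hy, odRel_unique (hσ y hy) hrel⟩
  have hdisj : ∀ m m', m < m' → Disjoint (RsetM G n e m) (RsetM G n e m') := by
    intro m m' hmm'
    rw [Set.disjoint_left]
    rintro y ⟨_, l, hle, _⟩ ⟨htriv', _⟩
    have h1 := (htriv' m hmm').1
    rw [hle] at h1
    simp at h1
  have hdisjinf : ∀ m, Disjoint (RsetM G n e m) (Rinf G n e) := by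
    intro m
    rw [Set.disjoint_left]
    rintro y ⟨_, l, hle, _⟩ hinf
    have h1 := (hinf m).1
    rw [hle] at h1
    simp at h1
  have hclosed : IsClosed ((⋃ m, RsetM G n e m) ∪ Rinf G n e) := by
    rw [← isOpen_compl_iff]
    rw [isOpen_iff_forall_mem_open]
    intro z hzc
    have hz1 : z ∉ Rinf G n e := fun h => hzc (Or.inr h)
    have hz2 : ∀ m, z ∉ RsetM G n e m := fun m h => hzc (Or.inl (Set.mem_iUnion.2 ⟨m, h⟩))
    obtain ⟨i, hi⟩ := not_forall.1 hz1
    refine ⟨⋂ j ∈ Finset.range (i + 1),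
      {w : Yt G n | w.val j ∈ ({z.val j} : Set (Xc G n j))}, ?_, ?_, ?_⟩
    · intro w hw
      simp only [Set.mem_iInter, Finset.mem_range, Set.mem_setOf_eq,
        Set.mem_singleton_iff] at hw
      have hwz : ∀ j, j ≤ i → yc w j = yc z j := by
        intro j hj
        show (w.val j).val = (z.val j).val
        rw [hw j (by omega)]
      rintro (hw1 | hw1)
      · obtain ⟨m, hm⟩ := Set.mem_iUnion.1 hw1
        by_cases hmi : m ≤ i
        · refine hz2 m ⟨?_, ?_⟩
          · intro j hj
            rw [← hwz j (by omega)]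
            exact hm.1 j hj
          · obtain ⟨l, hl1, hl2⟩ := hm.2
            exact ⟨l, (hwz m hmi) ▸ hl1, hl2⟩
        · have h1 := hm.1 i (by omega)
          rw [hwz i (le_refl i)] at h1
          exact hi h1
      · have h1 := hw1 i
        rw [hwz i (le_refl i)] at h1
        exact hi h1
    · exact (isClopen_biInter_finset fun j _ => isClopen_coord j _).isOpen
    · simp
  refine ⟨heq ▸ hclosed, heq, fun m => rsetM_clopen e m, ?_, hdisjinf⟩
  intro m m' hne
  rcases lt_or_gt_of_ne hne with h | h
  · exact hdisj m m' h
  · exact (hdisj m' m h).symm
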